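/- Let G be a countable group acting continuously on a compact metrizable space X. Define SBP₂(X) to be the set of pairs (x₁, x₂) ∈ X² with x₁ ≠ x₂ such that there is no open neighbourhood U of x₁ with x₂ ∉ closure(U) and μ(∂U) = 0 for all G-invariant Borel probability measures μ. Then the action G ↪ X has the small boundary property if and only if SBP₂(X) = ∅. -/

import Mathlib

open MeasureTheory Topology

/-- A measure is invariant for the action of `G`. -/
def IsInvariantMeasure (G : Type*) {X : Type*} [Group G] [MulAction G X]
    [MeasurableSpace X] (μ : Measure X) : Prop :=
  ∀ g : G, Measure.map (fun x : X => g • x) μ = μ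

/-- The small boundary property for the action of `G` on `X`. -/
def ActionSBP (G X : Type*) [Group G] [MulAction G X] [TopologicalSpace X]
    [MeasurableSpace X] : Prop :=
  ∃ B : Set (Set X), TopologicalSpace.IsTopologicalBasis B ∧
    ∀ U ∈ B, ∀ μ : ProbabilityMeasure X, IsInvariantMeasure G (μ : Measure X) →
      (μ : Measure X) (frontier U) = 0

/-- The set of SBP pairs: pairs of distinct points `(x₁, x₂)` such that there is no
open neighbourhood `U` of `x₁` with `x₂ ∉ closure U` whose boundary is null for every
`G`-invariant Borel probability measure. -/
def SBP2 (G : Type*) (X : Type*) [Group G] [MulAction G X] [TopologicalSpace X]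
    [MeasurableSpace X] : Set (X × X) :=
  {p | p.1 ≠ p.2 ∧
    ¬∃ U : Set X, IsOpen U ∧ p.1 ∈ U ∧ p.2 ∉ closure U ∧
      ∀ μ : ProbabilityMeasure X, IsInvariantMeasure G (μ : Measure X) →
        (μ : Measure X) (frontier U) = 0}

private lemma frontier_biInter_finset {ι X : Type*} [TopologicalSpace X]
    (t : Finset ι) (f : ι → Set X) :
    frontier (⋂ i ∈ t, f i) ⊆ ⋃ i ∈ t, frontier (f i) := by
  classical
  induction t using Finset.induction with
  | empty => simp
  | insert a s hi ih =>
    simp only [Finset.mem_insert, Set.iInter_iInter_eq_or_left, Set.iUnion_iUnion_eq_or_left]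
    refine (frontier_inter_subset _ _).trans ?_
    exact Set.union_subset_union Set.inter_subset_left (Set.inter_subset_right.trans ih)

theorem sbp_iff_no_sbp_pairs {G X : Type*} [Group G] [Countable G]
    [TopologicalSpace X] [CompactSpace X] [TopologicalSpace.MetrizableSpace X]
    [MeasurableSpace X] [BorelSpace X] [MulAction G X] [ContinuousConstSMul G X] :
    ActionSBP G X ↔ SBP2 G X = ∅ := by
  constructor
  · rintro ⟨B, hB, hnull⟩
    rw [Set.eq_empty_iff_forall_notMem]
    rintro ⟨x, y⟩ ⟨hxy, hno⟩
    obtain ⟨V₁, V₂, hV₁, hV₂, hxV₁, hyV₂, hdisj⟩ := t2_separation hxy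
    obtain ⟨U, hUB, hxU, hUV₁⟩ := hB.exists_subset_of_mem_open hxV₁ hV₁
    refine hno ⟨U, hB.isOpen hUB, hxU, fun hyc => ?_, hnull U hUB⟩
    have hsub : closure U ⊆ V₂ᶜ :=
      closure_minimal (hUV₁.trans hdisj.subset_compl_right) hV₂.isClosed_compl
    exact hsub hyc hyV₂
  · intro h
    refine ⟨{U | IsOpen U ∧ ∀ μ : ProbabilityMeasure X, IsInvariantMeasure G (μ : Measure X) →
      (μ : Measure X) (frontier U) = 0}, ?_, fun U hU => hU.2⟩
    refine TopologicalSpace.isTopologicalBasis_of_isOpen_of_nhds (fun U hU => hU.1) ?_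
    intro x W hxW hW
    classical
    -- For each y ∉ W, choose a small-boundary neighbourhood separating x from y
    have key : ∀ y : X, y ∈ Wᶜ → ∃ U : Set X, IsOpen U ∧ x ∈ U ∧ y ∉ closure U ∧
        ∀ μ : ProbabilityMeasure X, IsInvariantMeasure G (μ : Measure X) →
          (μ : Measure X) (frontier U) = 0 := by
      intro y hy
      have hxy : x ≠ y := fun he => hy (he ▸ hxW)
      have : (x, y) ∉ SBP2 G X := by rw [h]; exact Set.notMem_empty _
      simp only [SBP2, Set.mem_setOf_eq, not_and, not_not] at this
      exact this hxy
    choose U hUo hxU hycl hnull using key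
    have hK : IsCompact (Wᶜ) := (hW.isClosed_compl).isCompact
    have hcov : Wᶜ ⊆ ⋃ y : (Wᶜ : Set X), (closure (U y y.2))ᶜ := by
      intro y hy
      exact Set.mem_iUnion.mpr ⟨⟨y, hy⟩, hycl y hy⟩
    obtain ⟨t, ht⟩ := hK.elim_finite_subcover (fun y : (Wᶜ : Set X) => (closure (U y y.2))ᶜ)
      (fun y => isClosed_closure.isOpen_compl) hcov
    refine ⟨⋂ y ∈ t, U y y.2, ⟨isOpen_biInter_finset fun y _ => hUo y y.2, ?_⟩,
      Set.mem_biInter fun y _ => hxU y y.2, ?_⟩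
    · intro μ hμ
      refine measure_mono_null (frontier_biInter_finset t _) ?_
      refine (measure_biUnion_null_iff t.countable_toSet).mpr fun y _ => hnull y y.2 μ hμ
    · intro z hz
      by_contra hzW
      obtain ⟨y, hyt, hyz⟩ := Set.mem_iUnion₂.mp (ht hzW)
      exact hyz (subset_closure (Set.mem_iInter₂.mp hz y hyt))
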